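/- Let n ≥ 1 be an integer. If N ~ Poisson(n), then Pr(N = n) + Pr(N = n−1) = 2 e^{−n} n^n / n! ≤ 1/√n. -/

import Mathlib

open scoped BigOperators

/-- The Poisson probability mass function with mean `λ`: `Pr(N = t) = e^{-λ} λ^t / t!`. -/
noncomputable def poissonPMF (lam : ℝ) (t : ℕ) : ℝ := Real.exp (-lam) * lam ^ t / t.factorial

open Filter Real in
lemma sqrt_pi_le_stirlingSeq {n : ℕ} (hn : 1 ≤ n) : Real.sqrt Real.pi ≤ Stirling.stirlingSeq n := by
  obtain ⟨k, rfl⟩ := Nat.exists_eq_add_of_le hn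
  have hanti : Antitone (Stirling.stirlingSeq ∘ Nat.succ) := fun a b hab => by
    have := Stirling.log_stirlingSeq'_antitone hab
    have ha := Stirling.stirlingSeq'_pos b
    have hb := Stirling.stirlingSeq'_pos a
    simp only [Function.comp] at this ⊢
    exact (Real.log_le_log_iff ha hb).mp this
  have htend : Tendsto (Stirling.stirlingSeq ∘ Nat.succ) atTop (nhds (Real.sqrt Real.pi)) :=
    Stirling.tendsto_stirlingSeq_sqrt_pi.comp (tendsto_add_atTop_nat 1)
  have : Real.sqrt Real.pi ≤ (Stirling.stirlingSeq ∘ Nat.succ) k :=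
    hanti.le_of_tendsto htend k
  simpa [Nat.succ_eq_add_one, Nat.add_comm] using this

lemma stirling_lower (n : ℕ) (hn : 1 ≤ n) :
    Real.sqrt Real.pi * (Real.sqrt (2 * n) * ((n : ℝ) / Real.exp 1) ^ n)
      ≤ (n.factorial : ℝ) := by
  have h := sqrt_pi_le_stirlingSeq hn
  have hpos : 0 < Real.sqrt (2 * n) * ((n : ℝ) / Real.exp 1) ^ n := by
    have : (0:ℝ) < n := by exact_mod_cast hn
    positivity
  rw [Stirling.stirlingSeq, le_div_iff₀ hpos] at h
  linarith

/-- If `N ~ Poisson(n)` with `n ≥ 1`, then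
`Pr(N = n) + Pr(N = n-1) = 2 e^{-n} n^n / n! ≤ 1/√n`. -/
theorem poisson_mode_prob (n : ℕ) (hn : 1 ≤ n) :
    poissonPMF (n : ℝ) n + poissonPMF (n : ℝ) (n - 1)
        = 2 * Real.exp (-(n : ℝ)) * (n : ℝ) ^ n / n.factorial
      ∧ 2 * Real.exp (-(n : ℝ)) * (n : ℝ) ^ n / n.factorial ≤ 1 / Real.sqrt n := by
  have hnpos : (0:ℝ) < n := by exact_mod_cast hn
  have hfac : (n.factorial : ℝ) = (n : ℝ) * ((n-1).factorial : ℝ) := by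
    rw [← Nat.cast_mul, Nat.mul_factorial_pred (by omega)]
  have hpow : (n : ℝ) ^ n = (n : ℝ) ^ (n - 1) * n := by
    rw [← pow_succ, Nat.sub_add_cancel hn]
  have hfacpos : (0:ℝ) < n.factorial := by exact_mod_cast n.factorial_pos
  have hfacpos' : (0:ℝ) < (n-1).factorial := by exact_mod_cast (n-1).factorial_pos
  constructor
  · unfold poissonPMF
    rw [hfac, hpow]
    field_simp
    ring
  · -- reduce to Stirling bound
    have hstir := stirling_lower n hn
    have hexp : ((n : ℝ) / Real.exp 1) ^ n = (n : ℝ) ^ n * Real.exp (-(n:ℝ)) := by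
      rw [div_pow, Real.exp_neg, ← Real.exp_nat_mul, mul_one, div_eq_mul_inv]
    have hsqrtn : (0:ℝ) < Real.sqrt n := Real.sqrt_pos.2 hnpos
    rw [div_le_div_iff₀ hfacpos hsqrtn]
    have h2 : (2:ℝ) * Real.sqrt n ≤ Real.sqrt Real.pi * Real.sqrt (2 * n) := by
      rw [← Real.sqrt_mul Real.pi_pos.le, show (2:ℝ) * Real.sqrt n = Real.sqrt (4 * n) by
        rw [show (4:ℝ) * n = 2^2 * n by ring, Real.sqrt_mul (by positivity), Real.sqrt_sq (by norm_num)]]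
      apply Real.sqrt_le_sqrt
      nlinarith [Real.pi_gt_three]
    have hexpn : (0:ℝ) < Real.exp (-(n:ℝ)) := Real.exp_pos _
    have hpown : (0:ℝ) ≤ (n:ℝ)^n := by positivity
    calc 2 * Real.exp (-(n : ℝ)) * (n : ℝ) ^ n * Real.sqrt n
        = (2 * Real.sqrt n) * ((n:ℝ)^n * Real.exp (-(n:ℝ))) := by ring
      _ ≤ (Real.sqrt Real.pi * Real.sqrt (2*n)) * ((n:ℝ)^n * Real.exp (-(n:ℝ))) := by
          apply mul_le_mul_of_nonneg_right h2 (by positivity)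
      _ = Real.sqrt Real.pi * (Real.sqrt (2*n) * ((n:ℝ)/Real.exp 1)^n) := by rw [hexp]; ring
      _ ≤ n.factorial := hstir
      _ = 1 * n.factorial := by ring
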